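/- Let C be a cell of a matroid subdivision of Δ(3,n) of codimension 2 (inside the (n−1)-dimensional hypersimplex) whose matroid M(C) is loop-free with three connected components α, β, γ partitioning [n]. Then the bases of M(C) are exactly the triples {i,j,ℓ} with i ∈ α, j ∈ β, ℓ ∈ γ; moreover every codimension-1 cell of the subdivision containing C lies in one of the three hyperplanes H_α = {x : Σ_{i∈α} x_i = 1}, H_β, H_γ, so C is contained in at most six codimension-1 cells. -/

import Mathlib

open scoped Classical

section Subdivision

variable {E : Type*} [AddCommGroup E] [Module ℝ E]

/-- A polytope: the convex hull of a finite set of points. -/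
def IsPolytope (P : Set E) : Prop := ∃ s : Finset E, P = convexHull ℝ (s : Set E)

/-- `F` is a face of `C`: a convex extreme subset. -/
def IsFaceOf (F C : Set E) : Prop := IsExtreme ℝ C F ∧ Convex ℝ F

/-- A polytopal subdivision of a polytope `P`: a finite collection of nonempty polytopes
(cells), closed under taking (nonempty) faces, covering `P`, such that any two cells meet
in a common (possibly empty) face, and such that all vertices of cells are vertices of `P`. -/
structure IsSubdivision (P : Set E) (S : Set (Set E)) : Prop where
  finite : S.Finite
  nonempty_cell : ∀ C ∈ S, C.Nonempty
  poly : ∀ C ∈ S, IsPolytope C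
  face_closed : ∀ C ∈ S, ∀ F, IsFaceOf F C → F.Nonempty → F ∈ S
  cover : ⋃₀ S = P
  inter_face : ∀ C ∈ S, ∀ D ∈ S, IsFaceOf (C ∩ D) C
  vertices : ∀ C ∈ S, ∀ x ∈ Set.extremePoints ℝ C, x ∈ Set.extremePoints ℝ P

/-- A maximal cell of a collection of cells. -/
def MaximalCell (S : Set (Set E)) (C : Set E) : Prop :=
  C ∈ S ∧ ∀ D ∈ S, C ⊆ D → D = C

/-- The (relative) boundary of a polytope: the union of its proper faces. -/
def relBoundary (P : Set E) : Set E := ⋃₀ {F | IsFaceOf F P ∧ F ≠ P}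

/-- The restriction `Σ|_{P'} = {S ∩ P' : S ∈ Σ}` of a subdivision to a subpolytope. -/
def restrictSubdiv (S : Set (Set E)) (P' : Set E) : Set (Set E) := (fun C => C ∩ P') '' S

/-- `P'` is a subpolytope of `P`: the convex hull of a subset of the vertices of `P`. -/
def IsSubpolytope (P' P : Set E) : Prop :=
  ∃ W : Set E, W ⊆ Set.extremePoints ℝ P ∧ P' = convexHull ℝ W

/-- The tight-spans of `(P, S)` and `(P', S')` are isomorphic as posets: there is a
bijection between the interior cells (those not contained in the boundary) which is an
isomorphism for the partial order by reverse inclusion. -/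
def TightSpanIso (P : Set E) (S : Set (Set E)) (P' : Set E) (S' : Set (Set E)) : Prop :=
  ∃ e : {C : Set E // C ∈ S ∧ ¬ C ⊆ relBoundary P} ≃
        {C : Set E // C ∈ S' ∧ ¬ C ⊆ relBoundary P'},
    ∀ C D, C.1 ⊆ D.1 ↔ (e C).1 ⊆ (e D).1

/-- `S'` coarsens `S`: every cell of `S` is contained in some cell of `S'`. -/
def Coarsens (S S' : Set (Set E)) : Prop := ∀ C ∈ S, ∃ D ∈ S', C ⊆ D

/-- The trivial subdivision of a polytope: its collection of nonempty faces. -/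
def trivialSubdiv (P : Set E) : Set (Set E) := {F | IsFaceOf F P ∧ F.Nonempty}

/-- A coarsest (non-trivial) subdivision: a non-trivial subdivision whose only proper
coarsening is the trivial subdivision. -/
def IsCoarsest (P : Set E) (S : Set (Set E)) : Prop :=
  IsSubdivision P S ∧ S ≠ trivialSubdiv P ∧
    ∀ S', IsSubdivision P S' → Coarsens S S' → S' ≠ S → S' = trivialSubdiv P

end Subdivision

/-- The 0/1 indicator vector of a subset of `[n]`. -/
noncomputable def indicatorVec {n : ℕ} (B : Set (Fin n)) : Fin n → ℝ :=
  fun i => if i ∈ B then 1 else 0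

/-- The hypersimplex `Δ(k,n)`. -/
noncomputable def hypersimplex (k n : ℕ) : Set (Fin n → ℝ) :=
  convexHull ℝ {x | ∃ σ : Finset (Fin n), σ.card = k ∧ x = indicatorVec (↑σ : Set (Fin n))}

/-- `C` is the matroid polytope of a rank-`k` matroid on `[n]`. -/
def IsMatroidPolytope (k n : ℕ) (C : Set (Fin n → ℝ)) : Prop :=
  ∃ M : Matroid (Fin n), M.E = Set.univ ∧ (∀ b, M.IsBase b → b.ncard = k) ∧
    C = convexHull ℝ {x | ∃ b, M.IsBase b ∧ x = indicatorVec b}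

/-- A circuit of a matroid: a minimal dependent set. -/
def Matroid.IsCircuit' {α : Type*} (M : Matroid α) (C : Set α) : Prop :=
  M.Dep C ∧ ∀ D, D ⊂ C → ¬ M.Dep D

/-- Two elements are related if they are equal or lie on a common circuit. -/
def Matroid.ComponentRel {α : Type*} (M : Matroid α) (i j : α) : Prop :=
  i = j ∨ ∃ C, M.IsCircuit' C ∧ i ∈ C ∧ j ∈ C

section Aux
variable {n : ℕ}

/-- The linear functional `x ↦ ∑ i ∈ A, x i`. -/
noncomputable def sumOn (A : Finset (Fin n)) : (Fin n → ℝ) →ₗ[ℝ] ℝ where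
  toFun x := ∑ i ∈ A, x i
  map_add' x y := by simp [Finset.sum_add_distrib]
  map_smul' c x := by simp [Finset.mul_sum]

lemma sumOn_apply (A : Finset (Fin n)) (x : Fin n → ℝ) : sumOn A x = ∑ i ∈ A, x i := rfl

lemma sumOn_indicator (A : Finset (Fin n)) (b : Set (Fin n)) :
    sumOn A (indicatorVec b) = ((b ∩ (A : Set (Fin n))).ncard : ℝ) := by
  have h1 : b ∩ (A : Set (Fin n)) = ((A.filter (fun i => i ∈ b)) : Finset (Fin n)) := by
    ext i; simp [Finset.mem_filter, and_comm]
  rw [sumOn_apply, h1, Set.ncard_coe_finset]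
  simp [indicatorVec, Finset.sum_boole]

lemma indicatorVec_injective : Function.Injective (indicatorVec (n := n)) := by
  intro b b' h
  ext i
  have := congrFun h i
  by_cases hb : i ∈ b <;> by_cases hb' : i ∈ b' <;> simp_all [indicatorVec]

lemma indicatorVec_01 (b : Set (Fin n)) (i : Fin n) :
    indicatorVec b i = 0 ∨ indicatorVec b i = 1 := by
  by_cases h : i ∈ b <;> simp [indicatorVec, h]

/-- The unit box. -/
def stdBox (n : ℕ) : Set (Fin n → ℝ) := {y | ∀ i, 0 ≤ y i ∧ y i ≤ 1}

lemma convex_stdBox : Convex ℝ (stdBox n) := by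
  intro x hx y hy a b ha hb hab
  intro i
  have e : (a • x + b • y) i = a * x i + b * y i := by
    simp [Pi.add_apply, Pi.smul_apply, smul_eq_mul]
  rw [e]
  have h11 := (hx i).1; have h12 := (hx i).2
  have h21 := (hy i).1; have h22 := (hy i).2
  constructor
  · positivity
  · nlinarith

lemma mem_extremePoints_of_01 {P : Set (Fin n → ℝ)} (hP : P ⊆ stdBox n) {x : Fin n → ℝ}
    (hx : x ∈ P) (h01 : ∀ i, x i = 0 ∨ x i = 1) : x ∈ Set.extremePoints ℝ P := by
  refine ⟨hx, ?_⟩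
  intro x1 hx1 x2 hx2 hseg
  obtain ⟨a, b, ha, hb, hab, hsum⟩ := hseg
  have hkey : x1 = x ∧ x2 = x := by
    have h1 : ∀ i, x1 i = x i ∧ x2 i = x i := by
      intro i
      have e : a * x1 i + b * x2 i = x i := by
        have := congrFun hsum i; simpa [smul_eq_mul] using this
      have b11 := (hP hx1 i).1; have b12 := (hP hx1 i).2
      have b21 := (hP hx2 i).1; have b22 := (hP hx2 i).2
      rcases h01 i with h | h <;> rw [h] at e ⊢ <;> constructor <;> nlinarith
    exact ⟨funext fun i => (h1 i).1, funext fun i => (h1 i).2⟩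
  exact hkey.1

lemma hull_subset_box {s : Set (Fin n → ℝ)} (hs : ∀ x ∈ s, ∀ i, x i = 0 ∨ x i = 1) :
    convexHull ℝ s ⊆ stdBox n := by
  apply convexHull_min _ convex_stdBox
  intro x hx i
  rcases hs x hx i with h | h <;> simp [h]

lemma eq_of_hull_eq_01 {s t : Set (Fin n → ℝ)}
    (hs : ∀ x ∈ s, ∀ i, x i = 0 ∨ x i = 1) (ht : ∀ x ∈ t, ∀ i, x i = 0 ∨ x i = 1)
    (h : convexHull ℝ s = convexHull ℝ t) : s = t := by
  have key : ∀ (u : Set (Fin n → ℝ)), (∀ x ∈ u, ∀ i, x i = 0 ∨ x i = 1) →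
      Set.extremePoints ℝ (convexHull ℝ u) = u := by
    intro u hu
    apply Set.Subset.antisymm (extremePoints_convexHull_subset)
    intro x hx
    exact mem_extremePoints_of_01 (hull_subset_box hu) (subset_convexHull ℝ u hx) (hu x hx)
  have := key s hs
  rw [h, key t ht] at this
  exact this.symm
end Aux


section Aux2
variable {n : ℕ}

lemma exists_circuit'_subset (M : Matroid (Fin n)) :
    ∀ m (X : Set (Fin n)), X.ncard ≤ m → M.Dep X → ∃ K, K ⊆ X ∧ M.IsCircuit' K := by
  intro m
  induction m with
  | zero =>
    intro X hc hd
    have : X = ∅ := by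
      have := X.toFinite
      rw [← Set.ncard_eq_zero this]
      omega
    subst this
    exact absurd M.empty_indep hd.not_indep
  | succ m ih =>
    intro X hc hd
    by_cases h : ∀ D, D ⊂ X → ¬ M.Dep D
    · exact ⟨X, subset_rfl, hd, h⟩
    · push_neg at h
      obtain ⟨D, hDX, hDdep⟩ := h
      have hlt : D.ncard < X.ncard := Set.ncard_lt_ncard hDX X.toFinite
      obtain ⟨K, hK, hc'⟩ := ih D (by omega) hDdep
      exact ⟨K, hK.trans hDX.subset, hc'⟩

lemma vectorSpan_le_ker {W' : Type*} [AddCommGroup W'] [Module ℝ W'] {s : Set (Fin n → ℝ)}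
    (f : (Fin n → ℝ) →ₗ[ℝ] W') {c : W'} (h : ∀ x ∈ s, f x = c) :
    vectorSpan ℝ s ≤ LinearMap.ker f := by
  rw [vectorSpan_def]
  rw [Submodule.span_le]
  rintro v ⟨x, hx, y, hy, rfl⟩
  have : f (x -ᵥ y) = 0 := by
    have hx' := h x hx; have hy' := h y hy
    show f (x - y) = 0
    rw [map_sub, hx', hy', sub_self]
  simpa using this

lemma rank_one_parallel {R : Submodule ℝ (ℝ × ℝ)} (hR : Module.finrank ℝ R ≤ 1)
    {u v : ℝ × ℝ} (hu : u ∈ R) (hv : v ∈ R) : u.1 * v.2 = u.2 * v.1 := by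
  by_cases h0 : u = 0
  · simp [h0]
  · have hle : Submodule.span ℝ {u} ≤ R := by
      rw [Submodule.span_le]; simpa using hu
    have hfr : Module.finrank ℝ (Submodule.span ℝ {u}) = 1 := finrank_span_singleton h0
    have heq : Submodule.span ℝ {u} = R :=
      Submodule.eq_of_le_of_finrank_le hle (by rw [hfr]; exact hR)
    rw [← heq] at hv
    obtain ⟨a, rfl⟩ := Submodule.mem_span_singleton.1 hv
    simp [Prod.smul_fst, Prod.smul_snd, smul_eq_mul]
    ring
end Aux2


section Aux3
variable {n : ℕ}

/-- The vertex centroid of a finite set. -/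
noncomputable def vcentroid (s : Finset (Fin n → ℝ)) : Fin n → ℝ :=
  ((s.card : ℝ))⁻¹ • (∑ x ∈ s, x)

lemma vcentroid_mem (s : Finset (Fin n → ℝ)) (hs : s.Nonempty) :
    vcentroid s ∈ convexHull ℝ (s : Set (Fin n → ℝ)) := by
  have hcard : (0:ℝ) < s.card := by
    have := hs.card_pos; positivity
  have := s.centerMass_mem_convexHull (w := fun _ => (1:ℝ))
    (by intro i _; norm_num) (by simpa using hcard) (z := id) (by intro i hi; exact Finset.mem_coe.2 hi)
  simpa [Finset.centerMass, vcentroid] using this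

lemma vcentroid_perturb (s : Finset (Fin n → ℝ)) (hs : s.Nonempty) (v : Fin n → ℝ)
    (hv : v ∈ vectorSpan ℝ (s : Set (Fin n → ℝ))) :
    ∃ ε : ℝ, 0 < ε ∧ ∀ t : ℝ, |t| ≤ ε →
      vcentroid s + t • v ∈ convexHull ℝ (s : Set (Fin n → ℝ)) := by
  classical
  have hm0 : (0:ℝ) < (s.card : ℝ) := by have := hs.card_pos; positivity
  have hmne : ((s.card : ℝ)) ≠ 0 := ne_of_gt hm0
  -- express v as a combination of (x - c)
  have hvspan : v ∈ Submodule.span ℝ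
      ((s.image (fun x => x - vcentroid s) : Finset (Fin n → ℝ)) : Set (Fin n → ℝ)) := by
    have h1 : vectorSpan ℝ (s : Set (Fin n → ℝ)) ≤
        Submodule.span ℝ ((fun x => x - vcentroid s) '' (s : Set (Fin n → ℝ))) := by
      rw [vectorSpan_def, Submodule.span_le]
      rintro w ⟨x, hx, y, hy, rfl⟩
      show x -ᵥ y ∈ _
      have hxy : (x -ᵥ y : Fin n → ℝ) = (x - vcentroid s) - (y - vcentroid s) := by
        show x - y = _; abel
      rw [hxy]
      exact sub_mem (Submodule.subset_span ⟨x, hx, rfl⟩) (Submodule.subset_span ⟨y, hy, rfl⟩)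
    have himg : ((s.image (fun x => x - vcentroid s) : Finset (Fin n → ℝ)) : Set (Fin n → ℝ))
        = (fun x => x - vcentroid s) '' (s : Set (Fin n → ℝ)) := by simp
    rw [himg]
    exact h1 hv
  rw [Submodule.mem_span_finset] at hvspan
  obtain ⟨g, -, hg⟩ := hvspan
  have hinj : ∀ x ∈ s, ∀ y ∈ s, x - vcentroid s = y - vcentroid s → x = y := by
    intro x _ y _ h
    have := sub_left_injective h; exact this
  have hva : ∑ x ∈ s, g (x - vcentroid s) • (x - vcentroid s) = v := by
    rw [← hg, Finset.sum_image hinj]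
  obtain ⟨a, ha⟩ : ∃ a : (Fin n → ℝ) → ℝ, a = fun x => g (x - vcentroid s) := ⟨_, rfl⟩
  replace hva : ∑ x ∈ s, a x • (x - vcentroid s) = v := by simpa only [ha] using hva
  obtain ⟨A, hA⟩ : ∃ A : ℝ, A = ∑ x ∈ s, a x := ⟨_, rfl⟩
  obtain ⟨Mb, hMb⟩ : ∃ Mb : ℝ,
      Mb = (∑ x ∈ s, (|a x| + |A| / (s.card : ℝ))) + 1 := ⟨_, rfl⟩
  have hsum_nonneg : 0 ≤ ∑ x ∈ s, (|a x| + |A| / (s.card : ℝ)) :=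
    Finset.sum_nonneg (fun x _ => by positivity)
  have hMb0 : 0 < Mb := by rw [hMb]; linarith
  refine ⟨(1 / (s.card : ℝ)) / Mb, by positivity, ?_⟩
  intro t ht
  obtain ⟨w, hw⟩ : ∃ w : (Fin n → ℝ) → ℝ,
      w = fun x => 1 / (s.card : ℝ) + t * (a x - A / (s.card : ℝ)) := ⟨_, rfl⟩
  have hwsum : ∑ x ∈ s, w x = 1 := by
    rw [hw]
    simp only [Finset.sum_add_distrib, ← Finset.mul_sum, Finset.sum_sub_distrib,
      Finset.sum_const, Finset.sum_div, nsmul_eq_mul]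
    rw [← hA]
    field_simp
    ring
  have hwnonneg : ∀ x ∈ s, 0 ≤ w x := by
    intro x hx
    have hbound : |a x - A / (s.card : ℝ)| ≤ Mb := by
      have h1 : |a x - A / (s.card : ℝ)| ≤ |a x| + |A| / (s.card : ℝ) := by
        calc |a x - A / (s.card : ℝ)| ≤ |a x| + |A / (s.card : ℝ)| := abs_sub _ _
          _ = |a x| + |A| / (s.card : ℝ) := by rw [abs_div, abs_of_pos hm0]
      have h2 : |a x| + |A| / (s.card : ℝ) ≤ ∑ y ∈ s, (|a y| + |A| / (s.card : ℝ)) :=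
        Finset.single_le_sum (f := fun y => |a y| + |A| / (s.card : ℝ))
          (fun y _ => by positivity) hx
      rw [hMb]; linarith
    have h3 : |t * (a x - A / (s.card : ℝ))| ≤ 1 / (s.card : ℝ) := by
      calc |t * (a x - A / (s.card : ℝ))| = |t| * |a x - A / (s.card : ℝ)| := abs_mul _ _
        _ ≤ ((1 / (s.card : ℝ)) / Mb) * Mb :=
            mul_le_mul ht hbound (abs_nonneg _) (by positivity)
        _ = 1 / (s.card : ℝ) := div_mul_cancel₀ _ (ne_of_gt hMb0)
    have h4 := neg_abs_le (t * (a x - A / (s.card : ℝ)))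
    rw [hw]
    dsimp only
    linarith
  -- the convex combination equals c + t • v
  have hAc : ∑ x ∈ s, a x • vcentroid s = A • vcentroid s := by
    rw [← Finset.sum_smul, ← hA]
  have hkey : ∑ x ∈ s, w x • x = vcentroid s + t • v := by
    have hsplit : ∀ x : Fin n → ℝ,
        w x • x = ((s.card : ℝ))⁻¹ • x + t • (a x • x) - t • ((A * ((s.card : ℝ))⁻¹) • x) := by
      intro x
      rw [hw]
      dsimp only
      rw [one_div, div_eq_mul_inv, add_smul, mul_smul, sub_smul, smul_sub]
      abel
    calc ∑ x ∈ s, w x • x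
        = (∑ x ∈ s, ((s.card : ℝ))⁻¹ • x) + (∑ x ∈ s, t • (a x • x))
            - (∑ x ∈ s, t • ((A * ((s.card : ℝ))⁻¹) • x)) := by
          simp only [hsplit, Finset.sum_sub_distrib, Finset.sum_add_distrib]
      _ = vcentroid s + t • (∑ x ∈ s, a x • x) - t • ((A * ((s.card : ℝ))⁻¹) • ∑ x ∈ s, x) := by
          rw [← Finset.smul_sum, ← Finset.smul_sum, ← Finset.smul_sum, ← Finset.smul_sum,
            vcentroid]
      _ = vcentroid s + t • ((∑ x ∈ s, a x • x) - A • vcentroid s) := by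
          rw [smul_sub]
          rw [vcentroid, mul_smul]
          abel
      _ = vcentroid s + t • v := by
          rw [← hva, ← hAc, ← Finset.sum_sub_distrib]
          congr 2
          apply Finset.sum_congr rfl
          intro x _
          rw [smul_sub]
  rw [← hkey]
  have := s.centerMass_mem_convexHull (w := w) hwnonneg (by rw [hwsum]; norm_num)
    (z := id) (fun i hi => by exact Finset.mem_coe.2 hi)
  simpa [Finset.centerMass, hwsum] using this
end Aux3


section Aux4
variable {n : ℕ}

/-- The `i`-th standard basis vector. -/
noncomputable def delta (i : Fin n) : Fin n → ℝ := Pi.single i 1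

lemma sumOn_single (A : Finset (Fin n)) (j : Fin n) :
    sumOn A (delta j) = if j ∈ A then 1 else 0 := by
  show (∑ i ∈ A, delta j i) = _
  have hd : ∀ i, delta (n := n) j i = if i = j then 1 else 0 := by
    intro i; rw [delta, Pi.single_apply]
  simp only [hd]
  rw [Finset.sum_ite_eq' A j (fun _ => (1:ℝ))]

lemma vectorSpan_convexHull (s : Set (Fin n → ℝ)) :
    vectorSpan ℝ (convexHull ℝ s) = vectorSpan ℝ s := by
  rw [← direction_affineSpan, ← direction_affineSpan ℝ s, affineSpan_convexHull]

/-- rank-nullity instance for maps to `ℝ × ℝ`. -/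
lemma finrank_ker_prod_eq {f : (Fin n → ℝ) →ₗ[ℝ] ℝ × ℝ}
    (hf : Function.Surjective f) : Module.finrank ℝ (LinearMap.ker f) + 2 = n := by
  have h := LinearMap.finrank_range_add_finrank_ker f
  rw [LinearMap.range_eq_top.2 hf] at h
  rw [finrank_top] at h
  have h2 : Module.finrank ℝ (ℝ × ℝ) = 2 := by simp
  have h3 : Module.finrank ℝ (Fin n → ℝ) = n := by simp
  omega

lemma finrank_ker_pi3_eq {f : (Fin n → ℝ) →ₗ[ℝ] Fin 3 → ℝ}
    (hf : Function.Surjective f) : Module.finrank ℝ (LinearMap.ker f) + 3 = n := by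
  have h := LinearMap.finrank_range_add_finrank_ker f
  rw [LinearMap.range_eq_top.2 hf, finrank_top] at h
  have h2 : Module.finrank ℝ (Fin 3 → ℝ) = 3 := by simp
  have h3 : Module.finrank ℝ (Fin n → ℝ) = n := by simp
  omega

lemma surj_prod_sumOn {A : Finset (Fin n)} {i0 j0 : Fin n} (hi0 : i0 ∈ A) (hj0 : j0 ∉ A) :
    Function.Surjective ((sumOn A).prod (sumOn Finset.univ)) := by
  intro y
  refine ⟨y.1 • delta i0 + (y.2 - y.1) • delta j0, ?_⟩
  have h1 := sumOn_single A i0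
  have h2 := sumOn_single A j0
  have h3 := sumOn_single Finset.univ i0
  have h4 := sumOn_single Finset.univ j0
  ext
  · simp [LinearMap.prod_apply, map_add, map_smul, h1, h2, hi0, hj0]
  · simp [LinearMap.prod_apply, map_add, map_smul, h3, h4]

lemma surj_pi3_sumOn {α β γ : Finset (Fin n)} {i0 j0 l0 : Fin n}
    (hi0 : i0 ∈ α) (hj0 : j0 ∈ β) (hl0 : l0 ∈ γ)
    (hij : i0 ∉ β) (hik : i0 ∉ γ) (hji : j0 ∉ α) (hjk : j0 ∉ γ) (hki : l0 ∉ α) (hkj : l0 ∉ β) :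
    Function.Surjective (LinearMap.pi ![sumOn α, sumOn β, sumOn γ] :
      (Fin n → ℝ) →ₗ[ℝ] Fin 3 → ℝ) := by
  intro y
  refine ⟨y 0 • delta i0 + y 1 • delta j0 + y 2 • delta l0, ?_⟩
  funext k
  rw [LinearMap.pi_apply]
  fin_cases k <;>
    simp [map_add, map_smul, sumOn_single, hi0, hj0, hl0, hij, hik, hji, hjk, hki, hkj]

/-- An extreme subset which is a polytope spanning the same directions is everything. -/
lemma extreme_eq_of_vectorSpan_eq {F D : Set (Fin n → ℝ)} (hF : IsExtreme ℝ D F)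
    (sF : Finset (Fin n → ℝ)) (hFs : F = convexHull ℝ (sF : Set (Fin n → ℝ)))
    (hFne : F.Nonempty) (hspan : vectorSpan ℝ F = vectorSpan ℝ D) : F = D := by
  have hsFne : sF.Nonempty := by
    rcases hFne with ⟨x, hx⟩
    rw [hFs] at hx
    by_contra h
    rw [Finset.not_nonempty_iff_eq_empty] at h
    rw [h] at hx
    simp at hx
  have hcF : vcentroid sF ∈ F := by rw [hFs]; exact vcentroid_mem sF hsFne
  apply Set.Subset.antisymm hF.1
  intro y hy
  by_cases hyc : y = vcentroid sF
  · rw [hyc]; exact hcF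
  · have hv : vcentroid sF - y ∈ vectorSpan ℝ (sF : Set (Fin n → ℝ)) := by
      have h1 : vcentroid sF -ᵥ y ∈ vectorSpan ℝ D :=
        vsub_mem_vectorSpan ℝ (hF.1 hcF) hy
      rw [← hspan, hFs, vectorSpan_convexHull] at h1
      exact h1
    obtain ⟨ε, hε, hmem⟩ := vcentroid_perturb sF hsFne _ hv
    have hz : vcentroid sF + ε • (vcentroid sF - y) ∈ F := by
      rw [hFs]; exact hmem ε (by rw [abs_of_pos hε])
    -- vcentroid ∈ openSegment y z
    have hseg : vcentroid sF ∈ openSegment ℝ y (vcentroid sF + ε • (vcentroid sF - y)) := by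
      have h1ε : (1:ℝ) + ε ≠ 0 := by positivity
      refine ⟨ε / (1 + ε), 1 / (1 + ε), by positivity, by positivity, ?_, ?_⟩
      · field_simp
        ring
      · match_scalars <;> field_simp <;> ring
    exact hF.2 hy (hF.1 hz) hcF hseg
end Aux4

section Aux5
variable {n : ℕ}

lemma insert_pair_inter_card2 {u v f : Fin n} {A : Finset (Fin n)} (huv : u ≠ v)
    (hu : u ∈ A) (hv : v ∈ A) (hf : f ∉ A) :
    ((insert f {u, v} : Set (Fin n)) ∩ ↑A).ncard = 2 := by
  have h : (insert f {u, v} : Set (Fin n)) ∩ ↑A = {u, v} := by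
    ext w
    simp only [Set.mem_inter_iff, Set.mem_insert_iff, Set.mem_singleton_iff, Finset.mem_coe]
    constructor
    · rintro ⟨rfl | rfl | rfl, hw⟩
      · exact absurd hw hf
      · exact Or.inl rfl
      · exact Or.inr rfl
    · rintro (rfl | rfl)
      · exact ⟨Or.inr (Or.inl rfl), hu⟩
      · exact ⟨Or.inr (Or.inr rfl), hv⟩
  rw [h]
  exact Set.ncard_pair huv

lemma insert_pair_inter_card1 {u v f : Fin n} {A : Finset (Fin n)}
    (hu : u ∉ A) (hv : v ∉ A) (hf : f ∈ A) :
    ((insert f {u, v} : Set (Fin n)) ∩ ↑A).ncard = 1 := by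
  have h : (insert f {u, v} : Set (Fin n)) ∩ ↑A = {f} := by
    ext w
    simp only [Set.mem_inter_iff, Set.mem_insert_iff, Set.mem_singleton_iff, Finset.mem_coe]
    constructor
    · rintro ⟨rfl | rfl | rfl, hw⟩
      · rfl
      · exact absurd hw hu
      · exact absurd hw hv
    · rintro rfl
      exact ⟨Or.inl rfl, hf⟩
  rw [h]
  exact Set.ncard_singleton f

lemma insert_pair_inter_card0 {u v f : Fin n} {A : Finset (Fin n)}
    (hu : u ∉ A) (hv : v ∉ A) (hf : f ∉ A) :
    ((insert f {u, v} : Set (Fin n)) ∩ ↑A).ncard = 0 := by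
  have h : (insert f {u, v} : Set (Fin n)) ∩ ↑A = ∅ := by
    ext w
    simp only [Set.mem_inter_iff, Set.mem_insert_iff, Set.mem_singleton_iff, Finset.mem_coe,
      Set.mem_empty_iff_false, iff_false, not_and]
    rintro (rfl | rfl | rfl) <;> assumption
  rw [h]
  exact Set.ncard_empty _
end Aux5


set_option maxHeartbeats 1000000 in
/-- Let `C` be a codimension-2 cell of a matroid subdivision of `Δ(3,n)` whose matroid
`M` is loop-free with three connected components `α, β, γ` partitioning `[n]`.  Then the
bases of `M` are exactly the transversals `{i,j,ℓ}` with `i ∈ α`, `j ∈ β`, `ℓ ∈ γ`;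
every codimension-1 cell containing `C` lies in one of the hyperplanes `H_α`, `H_β`,
`H_γ`; and `C` is contained in at most six codimension-1 cells. -/
theorem codim_two_cell_structure (n : ℕ) (hn : 3 < n)
    (S : Set (Set (Fin n → ℝ))) (hS : IsSubdivision (hypersimplex 3 n) S)
    (hmat : ∀ D ∈ S, IsMatroidPolytope 3 n D)
    (C : Set (Fin n → ℝ)) (hC : C ∈ S)
    (M : Matroid (Fin n)) (hE : M.E = Set.univ)
    (hCM : C = convexHull ℝ {x | ∃ b, M.IsBase b ∧ x = indicatorVec b})
    (hloopfree : ∀ e, ∃ B, M.IsBase B ∧ e ∈ B)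
    (α β γ : Finset (Fin n))
    (hαne : α.Nonempty) (hβne : β.Nonempty) (hγne : γ.Nonempty)
    (hdisjαβ : Disjoint α β) (hdisjαγ : Disjoint α γ) (hdisjβγ : Disjoint β γ)
    (hcover : α ∪ β ∪ γ = Finset.univ)
    (hcompα : ∀ x ∈ α, ∀ y, y ∈ α ↔ M.ComponentRel x y)
    (hcompβ : ∀ x ∈ β, ∀ y, y ∈ β ↔ M.ComponentRel x y)
    (hcompγ : ∀ x ∈ γ, ∀ y, y ∈ γ ↔ M.ComponentRel x y)
    (hcodim2 : Module.finrank ℝ (vectorSpan ℝ C) = n - 3) :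
    (∀ b : Set (Fin n), M.IsBase b ↔ ∃ i ∈ α, ∃ j ∈ β, ∃ l ∈ γ, b = {i, j, l}) ∧
    (∀ D ∈ S, C ⊆ D → Module.finrank ℝ (vectorSpan ℝ D) = n - 2 →
      (D ⊆ {x | ∑ i ∈ α, x i = 1} ∨ D ⊆ {x | ∑ i ∈ β, x i = 1} ∨
        D ⊆ {x | ∑ i ∈ γ, x i = 1})) ∧
    {D | D ∈ S ∧ C ⊆ D ∧ Module.finrank ℝ (vectorSpan ℝ D) = n - 2}.ncard ≤ 6 := by
  classical
  have hn4 : 4 ≤ n := hn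
  -- membership/disjointness basics
  have hmempart : ∀ i : Fin n, i ∈ α ∨ i ∈ β ∨ i ∈ γ := by
    intro i
    have h : i ∈ α ∪ β ∪ γ := by rw [hcover]; exact Finset.mem_univ i
    simpa [Finset.mem_union, or_assoc] using h
  have hαβ : ∀ i : Fin n, i ∈ α → i ∈ β → False := fun i h1 h2 =>
    Finset.disjoint_left.1 hdisjαβ h1 h2
  have hαγ : ∀ i : Fin n, i ∈ α → i ∈ γ → False := fun i h1 h2 =>
    Finset.disjoint_left.1 hdisjαγ h1 h2
  have hβγ : ∀ i : Fin n, i ∈ β → i ∈ γ → False := fun i h1 h2 =>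
    Finset.disjoint_left.1 hdisjβγ h1 h2
  -- circuits lie in one part
  have hcircuit_part : ∀ K, M.IsCircuit' K → (K ⊆ ↑α ∨ K ⊆ ↑β ∨ K ⊆ ↑γ) := by
    intro K hK
    have hKne : K.Nonempty := by
      rcases Set.eq_empty_or_nonempty K with h | h
      · exfalso; rw [h] at hK; exact hK.1.not_indep M.empty_indep
      · exact h
    obtain ⟨x, hx⟩ := hKne
    have hrel : ∀ y ∈ K, M.ComponentRel x y := fun y hy => Or.inr ⟨K, hK, hx, hy⟩
    rcases hmempart x with h | h | h
    · exact Or.inl (fun y hy => Finset.mem_coe.2 ((hcompα x h y).2 (hrel y hy)))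
    · exact Or.inr (Or.inl (fun y hy => Finset.mem_coe.2 ((hcompβ x h y).2 (hrel y hy))))
    · exact Or.inr (Or.inr (fun y hy => Finset.mem_coe.2 ((hcompγ x h y).2 (hrel y hy))))
  -- singletons are independent
  have hsingle : ∀ e : Fin n, M.Indep {e} := by
    intro e
    obtain ⟨B, hB, heB⟩ := hloopfree e
    exact hB.indep.subset (by simpa using heB)
  -- unions of independent sets of the three parts are independent
  have hunion : ∀ Iα Iβ Iγ : Set (Fin n), Iα ⊆ ↑α → Iβ ⊆ ↑β → Iγ ⊆ ↑γ →
      M.Indep Iα → M.Indep Iβ → M.Indep Iγ → M.Indep (Iα ∪ Iβ ∪ Iγ) := by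
    intro Iα Iβ Iγ hIα hIβ hIγ h1 h2 h3
    by_contra hnot
    have hdep : M.Dep (Iα ∪ Iβ ∪ Iγ) :=
      Matroid.dep_iff.2 ⟨hnot, by rw [hE]; exact Set.subset_univ _⟩
    obtain ⟨K, hKsub, hK⟩ := exists_circuit'_subset M (Iα ∪ Iβ ∪ Iγ).ncard _ le_rfl hdep
    have hKind : M.Indep K := by
      rcases hcircuit_part K hK with h | h | h
      · refine h1.subset (fun y hy => ?_)
        rcases hKsub hy with (hy' | hy') | hy'
        · exact hy'
        · exact absurd (hIβ hy') (fun hc => hαβ y (h hy) hc)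
        · exact absurd (hIγ hy') (fun hc => hαγ y (h hy) hc)
      · refine h2.subset (fun y hy => ?_)
        rcases hKsub hy with (hy' | hy') | hy'
        · exact absurd (hIα hy') (fun hc => hαβ y hc (h hy))
        · exact hy'
        · exact absurd (hIγ hy') (fun hc => hβγ y (h hy) hc)
      · refine h3.subset (fun y hy => ?_)
        rcases hKsub hy with (hy' | hy') | hy'
        · exact absurd (hIα hy') (fun hc => hαγ y hc (h hy))
        · exact absurd (hIβ hy') (fun hc => hβγ y hc (h hy))
        · exact hy'
    exact hK.1.not_indep hKind
  -- all bases of M have three elements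
  obtain ⟨M', hM'E, hM'3, hM'hull⟩ := hmat C hC
  have hvertsets : {x | ∃ b, M.IsBase b ∧ x = indicatorVec b}
      = {x | ∃ b, M'.IsBase b ∧ x = indicatorVec b} := by
    apply eq_of_hull_eq_01
    · rintro x ⟨b, -, rfl⟩ i; exact indicatorVec_01 b i
    · rintro x ⟨b, -, rfl⟩ i; exact indicatorVec_01 b i
    · rw [← hCM, hM'hull]
  have h3 : ∀ b, M.IsBase b → b.ncard = 3 := by
    intro b hb
    have hmem : indicatorVec b ∈ {x | ∃ b', M'.IsBase b' ∧ x = indicatorVec b'} := by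
      rw [← hvertsets]; exact ⟨b, hb, rfl⟩
    obtain ⟨b', hb', heq⟩ := hmem
    rw [indicatorVec_injective heq]
    exact hM'3 b' hb'
  -- independent sets have at most three elements
  have hindep3 : ∀ I, M.Indep I → I.ncard ≤ 3 := by
    intro I hI
    obtain ⟨B, hB, hIB⟩ := hI.exists_isBase_superset
    have := Set.ncard_le_ncard hIB B.toFinite
    rw [h3 B hB] at this
    exact this
  -- each part has rank one
  have hrank1α : ∀ I : Set (Fin n), I ⊆ ↑α → M.Indep I → I.ncard ≤ 1 := by
    intro I hIsub hI
    by_contra hlt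
    push_neg at hlt
    obtain ⟨x, y, hx, hy, hxy⟩ := (Set.one_lt_ncard_iff I.toFinite).1 hlt
    obtain ⟨j, hj⟩ := hβne
    obtain ⟨l, hl⟩ := hγne
    have hind : M.Indep ({x, y} ∪ {j} ∪ {l}) := by
      apply hunion
      · intro z hz; rcases hz with hz | hz <;> subst hz
        · exact hIsub hx
        · exact hIsub hy
      · intro z hz; rcases hz with rfl; exact hj
      · intro z hz; rcases hz with rfl; exact hl
      · exact hI.subset (by intro z hz; rcases hz with hz | hz <;> subst hz <;> assumption)
      · exact hsingle j
      · exact hsingle l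
    have hxα : x ∈ α := hIsub hx
    have hyα : y ∈ α := hIsub hy
    have hset : ({x, y} ∪ {j} ∪ {l} : Set (Fin n)) = {x, y, j, l} := by
      ext z; simp only [Set.mem_union, Set.mem_insert_iff, Set.mem_singleton_iff]; tauto
    rw [hset] at hind
    have hc4 : ({x, y, j, l} : Set (Fin n)).ncard = 4 := by
      rw [Set.ncard_insert_of_notMem (by
          simp only [Set.mem_insert_iff, Set.mem_singleton_iff]
          push_neg
          exact ⟨hxy, by rintro rfl; exact hαβ x hxα hj, by rintro rfl; exact hαγ x hxα hl⟩)
        (Set.toFinite _)]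
      rw [Set.ncard_insert_of_notMem (by
          simp only [Set.mem_insert_iff, Set.mem_singleton_iff]
          push_neg
          exact ⟨by rintro rfl; exact hαβ y hyα hj, by rintro rfl; exact hαγ y hyα hl⟩)
        (Set.toFinite _)]
      rw [Set.ncard_insert_of_notMem (by
          simp only [Set.mem_singleton_iff]
          rintro rfl; exact hβγ j hj hl) (Set.toFinite _)]
      simp
    have := hindep3 _ hind
    omega
  have hrank1β : ∀ I : Set (Fin n), I ⊆ ↑β → M.Indep I → I.ncard ≤ 1 := by
    intro I hIsub hI
    by_contra hlt
    push_neg at hlt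
    obtain ⟨x, y, hx, hy, hxy⟩ := (Set.one_lt_ncard_iff I.toFinite).1 hlt
    obtain ⟨i, hi⟩ := hαne
    obtain ⟨l, hl⟩ := hγne
    have hind : M.Indep ({i} ∪ {x, y} ∪ {l}) := by
      apply hunion
      · intro z hz; rcases hz with rfl; exact hi
      · intro z hz; rcases hz with hz | hz <;> subst hz
        · exact hIsub hx
        · exact hIsub hy
      · intro z hz; rcases hz with rfl; exact hl
      · exact hsingle i
      · exact hI.subset (by intro z hz; rcases hz with hz | hz <;> subst hz <;> assumption)
      · exact hsingle l
    have hxβ : x ∈ β := hIsub hx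
    have hyβ : y ∈ β := hIsub hy
    have hset : ({i} ∪ {x, y} ∪ {l} : Set (Fin n)) = {i, x, y, l} := by
      ext z; simp only [Set.mem_union, Set.mem_insert_iff, Set.mem_singleton_iff]; tauto
    rw [hset] at hind
    have hc4 : ({i, x, y, l} : Set (Fin n)).ncard = 4 := by
      rw [Set.ncard_insert_of_notMem (by
          simp only [Set.mem_insert_iff, Set.mem_singleton_iff]
          push_neg
          exact ⟨by rintro rfl; exact hαβ i hi hxβ, by rintro rfl; exact hαβ i hi hyβ,
            by rintro rfl; exact hαγ i hi hl⟩) (Set.toFinite _)]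
      rw [Set.ncard_insert_of_notMem (by
          simp only [Set.mem_insert_iff, Set.mem_singleton_iff]
          push_neg
          exact ⟨hxy, by rintro rfl; exact hβγ x hxβ hl⟩) (Set.toFinite _)]
      rw [Set.ncard_insert_of_notMem (by
          simp only [Set.mem_singleton_iff]
          rintro rfl; exact hβγ y hyβ hl) (Set.toFinite _)]
      simp
    have := hindep3 _ hind
    omega
  have hrank1γ : ∀ I : Set (Fin n), I ⊆ ↑γ → M.Indep I → I.ncard ≤ 1 := by
    intro I hIsub hI
    by_contra hlt
    push_neg at hlt
    obtain ⟨x, y, hx, hy, hxy⟩ := (Set.one_lt_ncard_iff I.toFinite).1 hlt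
    obtain ⟨i, hi⟩ := hαne
    obtain ⟨j, hj⟩ := hβne
    have hind : M.Indep ({i} ∪ {j} ∪ {x, y}) := by
      apply hunion
      · intro z hz; rcases hz with rfl; exact hi
      · intro z hz; rcases hz with rfl; exact hj
      · intro z hz; rcases hz with hz | hz <;> subst hz
        · exact hIsub hx
        · exact hIsub hy
      · exact hsingle i
      · exact hsingle j
      · exact hI.subset (by intro z hz; rcases hz with hz | hz <;> subst hz <;> assumption)
    have hxγ : x ∈ γ := hIsub hx
    have hyγ : y ∈ γ := hIsub hy
    have hset : ({i} ∪ {j} ∪ {x, y} : Set (Fin n)) = {i, j, x, y} := by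
      ext z; simp only [Set.mem_union, Set.mem_insert_iff, Set.mem_singleton_iff]; tauto
    rw [hset] at hind
    have hc4 : ({i, j, x, y} : Set (Fin n)).ncard = 4 := by
      rw [Set.ncard_insert_of_notMem (by
          simp only [Set.mem_insert_iff, Set.mem_singleton_iff]
          push_neg
          exact ⟨by rintro rfl; exact hαβ i hi hj, by rintro rfl; exact hαγ i hi hxγ,
            by rintro rfl; exact hαγ i hi hyγ⟩) (Set.toFinite _)]
      rw [Set.ncard_insert_of_notMem (by
          simp only [Set.mem_insert_iff, Set.mem_singleton_iff]
          push_neg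
          exact ⟨by rintro rfl; exact hβγ j hj hxγ, by rintro rfl; exact hβγ j hj hyγ⟩)
        (Set.toFinite _)]
      rw [Set.ncard_insert_of_notMem (by
          simp only [Set.mem_singleton_iff]
          exact hxy) (Set.toFinite _)]
      simp
    have := hindep3 _ hind
    omega
  -- the count decomposition
  have hsplit3 : ∀ b : Set (Fin n),
      (b ∩ ↑α).ncard + (b ∩ ↑β).ncard + (b ∩ ↑γ).ncard = b.ncard := by
    intro b
    have hdecomp : b = (b ∩ ↑α) ∪ ((b ∩ ↑β) ∪ (b ∩ ↑γ)) := by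
      ext z
      simp only [Set.mem_union, Set.mem_inter_iff, Finset.mem_coe]
      constructor
      · intro hz; rcases hmempart z with h | h | h
        · exact Or.inl ⟨hz, h⟩
        · exact Or.inr (Or.inl ⟨hz, h⟩)
        · exact Or.inr (Or.inr ⟨hz, h⟩)
      · rintro (⟨h, -⟩ | ⟨h, -⟩ | ⟨h, -⟩) <;> exact h
    conv_rhs => rw [hdecomp]
    rw [Set.ncard_union_eq (by
        rw [Set.disjoint_union_right]
        constructor
        · rw [Set.disjoint_left]
          rintro z ⟨-, hz1⟩ ⟨-, hz2⟩
          exact hαβ z hz1 hz2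
        · rw [Set.disjoint_left]
          rintro z ⟨-, hz1⟩ ⟨-, hz2⟩
          exact hαγ z hz1 hz2)
      (Set.toFinite _) (Set.toFinite _)]
    rw [Set.ncard_union_eq (by
        rw [Set.disjoint_left]
        rintro z ⟨-, hz1⟩ ⟨-, hz2⟩
        exact hβγ z hz1 hz2)
      (Set.toFinite _) (Set.toFinite _)]
    omega
  -- PART 1
  have part1 : ∀ b : Set (Fin n), M.IsBase b ↔ ∃ i ∈ α, ∃ j ∈ β, ∃ l ∈ γ, b = {i, j, l} := by
    intro b
    constructor
    · intro hb
      have hb3 := h3 b hb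
      have hA := hrank1α (b ∩ ↑α) Set.inter_subset_right (hb.indep.subset Set.inter_subset_left)
      have hB := hrank1β (b ∩ ↑β) Set.inter_subset_right (hb.indep.subset Set.inter_subset_left)
      have hG := hrank1γ (b ∩ ↑γ) Set.inter_subset_right (hb.indep.subset Set.inter_subset_left)
      have hsum := hsplit3 b
      rw [hb3] at hsum
      have hA1 : (b ∩ ↑α).ncard = 1 := by omega
      have hB1 : (b ∩ ↑β).ncard = 1 := by omega
      have hG1 : (b ∩ ↑γ).ncard = 1 := by omega
      obtain ⟨i, hi⟩ := Set.ncard_eq_one.1 hA1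
      obtain ⟨j, hj⟩ := Set.ncard_eq_one.1 hB1
      obtain ⟨l, hl⟩ := Set.ncard_eq_one.1 hG1
      have hiα : i ∈ α ∧ i ∈ b := by
        have : i ∈ b ∩ ↑α := by rw [hi]; exact Set.mem_singleton i
        exact ⟨this.2, this.1⟩
      have hjβ : j ∈ β ∧ j ∈ b := by
        have : j ∈ b ∩ ↑β := by rw [hj]; exact Set.mem_singleton j
        exact ⟨this.2, this.1⟩
      have hlγ : l ∈ γ ∧ l ∈ b := by
        have : l ∈ b ∩ ↑γ := by rw [hl]; exact Set.mem_singleton l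
        exact ⟨this.2, this.1⟩
      refine ⟨i, hiα.1, j, hjβ.1, l, hlγ.1, ?_⟩
      ext z
      simp only [Set.mem_insert_iff, Set.mem_singleton_iff]
      constructor
      · intro hz
        rcases hmempart z with h | h | h
        · have : z ∈ b ∩ ↑α := Set.mem_inter hz h
          rw [hi] at this; exact Or.inl this
        · have : z ∈ b ∩ ↑β := Set.mem_inter hz h
          rw [hj] at this; exact Or.inr (Or.inl this)
        · have : z ∈ b ∩ ↑γ := Set.mem_inter hz h
          rw [hl] at this; exact Or.inr (Or.inr this)
      · rintro (rfl | rfl | rfl)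
        · exact hiα.2
        · exact hjβ.2
        · exact hlγ.2
    · rintro ⟨i, hi, j, hj, l, hl, rfl⟩
      have hij : i ≠ j := by rintro rfl; exact hαβ i hi hj
      have hil : i ≠ l := by rintro rfl; exact hαγ i hi hl
      have hjl : j ≠ l := by rintro rfl; exact hβγ j hj hl
      have hset : ({i} ∪ {j} ∪ {l} : Set (Fin n)) = {i, j, l} := by
        ext z; simp only [Set.mem_union, Set.mem_insert_iff, Set.mem_singleton_iff]; tauto
      have hind : M.Indep {i, j, l} := by
        rw [← hset]
        apply hunion
        · intro z hz; rcases hz with rfl; exact hi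
        · intro z hz; rcases hz with rfl; exact hj
        · intro z hz; rcases hz with rfl; exact hl
        · exact hsingle i
        · exact hsingle j
        · exact hsingle l
      obtain ⟨B, hB, hsub⟩ := hind.exists_isBase_superset
      have hcard : ({i, j, l} : Set (Fin n)).ncard = 3 := by
        rw [Set.ncard_insert_of_notMem (by simp [hij, hil]) (Set.toFinite _),
          Set.ncard_insert_of_notMem (by simp [hjl]) (Set.toFinite _)]
        simp
      have heq : ({i, j, l} : Set (Fin n)) = B := by
        apply Set.eq_of_subset_of_ncard_le hsub _ B.toFinite
        rw [h3 B hB, hcard]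
      rw [heq]
      exact hB
  -- transversal intersections
  have htricnt : ∀ i ∈ α, ∀ j ∈ β, ∀ l ∈ γ,
      ({i, j, l} : Set (Fin n)) ∩ ↑α = {i} ∧ ({i, j, l} : Set (Fin n)) ∩ ↑β = {j} ∧
        ({i, j, l} : Set (Fin n)) ∩ ↑γ = {l} := by
    intro i hi j hj l hl
    refine ⟨?_, ?_, ?_⟩ <;>
      (ext z;
       simp only [Set.mem_inter_iff, Set.mem_insert_iff, Set.mem_singleton_iff, Finset.mem_coe])
    · constructor
      · rintro ⟨rfl | rfl | rfl, hz⟩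
        · rfl
        · exact absurd hj (fun h => hαβ z hz h)
        · exact absurd hl (fun h => hαγ z hz h)
      · rintro rfl
        exact ⟨Or.inl rfl, hi⟩
    · constructor
      · rintro ⟨rfl | rfl | rfl, hz⟩
        · exact absurd hz (fun h => hαβ z hi h)
        · rfl
        · exact absurd hz (fun h => hβγ z h hl)
      · rintro rfl
        exact ⟨Or.inr (Or.inl rfl), hj⟩
    · constructor
      · rintro ⟨rfl | rfl | rfl, hz⟩
        · exact absurd hz (fun h => hαγ z hi h)
        · exact absurd hz (fun h => hβγ z hj h)
        · rfl
      · rintro rfl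
        exact ⟨Or.inr (Or.inr rfl), hl⟩
  -- picked elements of the three parts
  obtain ⟨i0, hi0⟩ := hαne
  obtain ⟨j0, hj0⟩ := hβne
  obtain ⟨l0, hl0⟩ := hγne
  have hi0β : i0 ∉ β := fun h => hαβ i0 hi0 h
  have hi0γ : i0 ∉ γ := fun h => hαγ i0 hi0 h
  have hj0α : j0 ∉ α := fun h => hαβ j0 h hj0
  have hj0γ : j0 ∉ γ := fun h => hβγ j0 hj0 h
  have hl0α : l0 ∉ α := fun h => hαγ l0 h hl0
  have hl0β : l0 ∉ β := fun h => hβγ l0 h hl0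
  set Φ : (Fin n → ℝ) →ₗ[ℝ] Fin 3 → ℝ := LinearMap.pi ![sumOn α, sumOn β, sumOn γ] with hΦdef
  -- the partition linear map and its kernel
  have hΦsurj : Function.Surjective Φ :=
    by rw [hΦdef]; exact surj_pi3_sumOn hi0 hj0 hl0 hi0β hi0γ hj0α hj0γ hl0α hl0β
  have hVrank : Module.finrank ℝ
      (LinearMap.ker Φ) + 3 = n := finrank_ker_pi3_eq hΦsurj
  -- decomposition of the total sum
  have hsumdecomp : ∀ x : Fin n → ℝ,
      sumOn Finset.univ x = sumOn α x + sumOn β x + sumOn γ x := by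
    intro x
    have hd1 : Disjoint (α ∪ β) γ := Finset.disjoint_union_left.2 ⟨hdisjαγ, hdisjβγ⟩
    rw [sumOn_apply, sumOn_apply, sumOn_apply, sumOn_apply, ← hcover,
      Finset.sum_union hd1, Finset.sum_union hdisjαβ]
  -- convexity of hyperplane slices
  have hconvH : ∀ (A : Finset (Fin n)) (r : ℝ), Convex ℝ {x : Fin n → ℝ | ∑ i ∈ A, x i = r} := by
    intro A r
    have h : {x : Fin n → ℝ | ∑ i ∈ A, x i = r} = (sumOn A) ⁻¹' {r} := by
      ext x
      simp [sumOn_apply]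
    rw [h]
    exact (convex_singleton r).linear_preimage (sumOn A)
  -- C lies on all three hyperplanes
  have hCones : ∀ x ∈ C, sumOn α x = 1 ∧ sumOn β x = 1 ∧ sumOn γ x = 1 := by
    have hconv : Convex ℝ {x : Fin n → ℝ | sumOn α x = 1 ∧ sumOn β x = 1 ∧ sumOn γ x = 1} := by
      have e : {x : Fin n → ℝ | sumOn α x = 1 ∧ sumOn β x = 1 ∧ sumOn γ x = 1}
          = {x : Fin n → ℝ | ∑ i ∈ α, x i = 1} ∩
            ({x : Fin n → ℝ | ∑ i ∈ β, x i = 1} ∩ {x : Fin n → ℝ | ∑ i ∈ γ, x i = 1}) := by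
        ext x
        simp [sumOn_apply, Set.mem_inter_iff]
      rw [e]
      exact (hconvH α 1).inter ((hconvH β 1).inter (hconvH γ 1))
    intro x hx
    rw [hCM] at hx
    refine convexHull_min ?_ hconv hx
    rintro y ⟨b, hb, rfl⟩
    obtain ⟨i, hi, j, hj, l, hl, rfl⟩ := (part1 b).1 hb
    obtain ⟨h1, h2, h3'⟩ := htricnt i hi j hj l hl
    refine ⟨?_, ?_, ?_⟩ <;> rw [sumOn_indicator]
    · rw [h1]; simp
    · rw [h2]; simp
    · rw [h3']; simp
  have hΦC : ∀ x ∈ C, Φ x = ![1, 1, 1] := by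
    intro x hx
    obtain ⟨h1, h2, h3'⟩ := hCones x hx
    funext k
    rw [hΦdef, LinearMap.pi_apply]
    fin_cases k <;> simp [h1, h2, h3']
  have hVC : vectorSpan ℝ C = LinearMap.ker Φ := by
    apply Submodule.eq_of_le_of_finrank_le (vectorSpan_le_ker _ hΦC)
    rw [hcodim2]
    omega
  -- PART 2
  have part2 : ∀ D ∈ S, C ⊆ D → Module.finrank ℝ (vectorSpan ℝ D) = n - 2 →
      (D ⊆ {x | ∑ i ∈ α, x i = 1} ∨ D ⊆ {x | ∑ i ∈ β, x i = 1} ∨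
        D ⊆ {x | ∑ i ∈ γ, x i = 1}) := by
    intro D hD hCD hdimD
    set W : Submodule ℝ (Fin n → ℝ) := vectorSpan ℝ D with hWdef
    set g : (Fin n → ℝ) →ₗ[ℝ] ℝ × ℝ := (sumOn α).prod (sumOn β) with hgdef
    obtain ⟨N, hNE, hN3, hNhull⟩ := hmat D hD
    -- every transversal is a base of N
    have hNtrans : ∀ i ∈ α, ∀ j ∈ β, ∀ l ∈ γ, N.IsBase {i, j, l} := by
      intro i hi j hj l hl
      have hMb : M.IsBase {i, j, l} := (part1 _).2 ⟨i, hi, j, hj, l, hl, rfl⟩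
      have hmem : indicatorVec {i, j, l} ∈ D := by
        apply hCD
        rw [hCM]
        exact subset_convexHull ℝ _ ⟨_, hMb, rfl⟩
      have hbox : D ⊆ stdBox n := by
        rw [hNhull]
        exact hull_subset_box (by rintro x ⟨b, -, rfl⟩ i'; exact indicatorVec_01 b i')
      have hext : indicatorVec {i, j, l} ∈ Set.extremePoints ℝ D :=
        mem_extremePoints_of_01 hbox hmem (indicatorVec_01 _)
      rw [hNhull] at hext
      obtain ⟨b, hb, heq⟩ := extremePoints_convexHull_subset hext
      rwa [indicatorVec_injective heq]
    -- the sum is 3 on D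
    have hconvU : Convex ℝ {y : Fin n → ℝ | sumOn Finset.univ y = 3} := by
      have h : {y : Fin n → ℝ | sumOn Finset.univ y = 3}
          = (sumOn Finset.univ) ⁻¹' {3} := by ext y; simp
      rw [h]
      exact (convex_singleton (3:ℝ)).linear_preimage _
    have hDsum : ∀ x ∈ D, sumOn Finset.univ x = 3 := by
      intro x hx
      rw [hNhull] at hx
      refine convexHull_min ?_ hconvU hx
      rintro y ⟨b, hb, rfl⟩
      show sumOn Finset.univ (indicatorVec b) = 3
      rw [sumOn_indicator]
      rw [Finset.coe_univ, Set.inter_univ, hN3 b hb]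
      norm_num
    -- vector span comparisons
    have hVW : LinearMap.ker Φ ≤ W := by
      rw [← hVC]
      exact vectorSpan_mono ℝ hCD
    have hWsum : W ≤ LinearMap.ker (sumOn Finset.univ) :=
      vectorSpan_le_ker _ hDsum
    -- the two-coordinate projection
    have hkerg : ∀ w ∈ W, g w = 0 → w ∈ LinearMap.ker Φ := by
      intro w hw h0
      rw [hgdef] at h0
      have hα0 : sumOn α w = 0 := congrArg Prod.fst h0
      have hβ0 : sumOn β w = 0 := congrArg Prod.snd h0
      have huniv : sumOn Finset.univ w = 0 := hWsum hw
      have hγ0 : sumOn γ w = 0 := by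
        have := hsumdecomp w
        rw [huniv, hα0, hβ0] at this
        linarith
      rw [LinearMap.mem_ker, hΦdef]
      funext k
      rw [LinearMap.pi_apply]
      fin_cases k <;> simp [hα0, hβ0, hγ0]
    have hrankR : Module.finrank ℝ (W.map g) = 1 := by
      have h1 := LinearMap.finrank_range_add_finrank_ker (g.domRestrict W)
      have hrange : LinearMap.range (g.domRestrict W) = W.map g := by
        ext y
        constructor
        · rintro ⟨⟨x, hx⟩, rfl⟩
          exact ⟨x, hx, rfl⟩
        · rintro ⟨x, hx, rfl⟩
          exact ⟨⟨x, hx⟩, rfl⟩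
      have hkereq : LinearMap.ker (g.domRestrict W)
          = Submodule.comap W.subtype (LinearMap.ker Φ) := by
        ext w
        simp only [LinearMap.mem_ker, LinearMap.domRestrict_apply, Submodule.mem_comap,
          Submodule.subtype_apply]
        constructor
        · intro h
          exact hkerg w.1 w.2 h
        · intro h
          rw [hΦdef] at h
          have hα0 : sumOn α w.1 = 0 := by
            have := congrFun h 0
            simpa [LinearMap.pi_apply] using this
          have hβ0 : sumOn β w.1 = 0 := by
            have := congrFun h 1
            simpa [LinearMap.pi_apply] using this
          show g w.1 = 0
          rw [hgdef, LinearMap.prod_apply]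
          exact Prod.ext hα0 hβ0
      rw [hrange, hkereq] at h1
      have hcomap : Module.finrank ℝ (Submodule.comap W.subtype (LinearMap.ker Φ))
          = Module.finrank ℝ (LinearMap.ker Φ) :=
        LinearEquiv.finrank_eq (Submodule.comapSubtypeEquivOfLe hVW)
      rw [hcomap] at h1
      have hWrk : Module.finrank ℝ W = n - 2 := hdimD
      rw [hWrk] at h1
      omega
    -- base vectors in D
    have hmemD : ∀ b, N.IsBase b → indicatorVec b ∈ D := by
      intro b hb
      rw [hNhull]
      exact subset_convexHull ℝ _ ⟨b, hb, rfl⟩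
    have hτ0 : N.IsBase ({i0, j0, l0} : Set (Fin n)) := hNtrans i0 hi0 j0 hj0 l0 hl0
    obtain ⟨hτ0α, hτ0β, hτ0γ⟩ := htricnt i0 hi0 j0 hj0 l0 hl0
    have hgval : ∀ b : Set (Fin n), g (indicatorVec b)
        = (((b ∩ ↑α).ncard : ℝ), ((b ∩ ↑β).ncard : ℝ)) := by
      intro b
      rw [hgdef, LinearMap.prod_apply]
      exact Prod.ext (sumOn_indicator α b) (sumOn_indicator β b)
    -- the parallelism relation between bases
    have hkey : ∀ τ τ', N.IsBase τ → N.IsBase τ' →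
        (((τ ∩ ↑α).ncard : ℤ) - 1) * (((τ' ∩ ↑β).ncard : ℤ) - 1)
          = (((τ ∩ ↑β).ncard : ℤ) - 1) * (((τ' ∩ ↑α).ncard : ℤ) - 1) := by
      intro τ τ' hτ hτ'
      have hu : ∀ σ, N.IsBase σ →
          ((((σ ∩ ↑α).ncard : ℝ) - 1), (((σ ∩ ↑β).ncard : ℝ) - 1))
            ∈ W.map g := by
        intro σ hσ
        refine ⟨indicatorVec σ - indicatorVec ({i0, j0, l0} : Set (Fin n)),
          vsub_mem_vectorSpan ℝ (hmemD σ hσ) (hmemD _ hτ0), ?_⟩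
        rw [map_sub, hgval, hgval, hτ0α, hτ0β]
        simp [Prod.ext_iff]
      have h1 := rank_one_parallel (le_of_eq hrankR) (hu τ hτ) (hu τ' hτ')
      dsimp only at h1
      exact_mod_cast h1
    -- counts add up to three
    have hsum3 : ∀ τ, N.IsBase τ →
        (τ ∩ ↑α).ncard + (τ ∩ ↑β).ncard + (τ ∩ ↑γ).ncard = 3 := by
      intro τ hτ
      rw [hsplit3 τ, hN3 τ hτ]
    -- suppose D is in none of the hyperplanes
    by_contra hcon
    push_neg at hcon
    obtain ⟨hna, hnb, hnc⟩ := hcon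
    have hexmk : ∀ (A : Finset (Fin n)), ¬ D ⊆ {x | ∑ i ∈ A, x i = 1} →
        ∃ τ, N.IsBase τ ∧ (τ ∩ ↑A).ncard ≠ 1 := by
      intro A hnsub
      by_contra h
      push_neg at h
      apply hnsub
      rw [hNhull]
      refine convexHull_min ?_ (hconvH A 1)
      rintro y ⟨b, hb, rfl⟩
      show (∑ i ∈ A, indicatorVec b i) = 1
      rw [← sumOn_apply, sumOn_indicator, h b hb]
      norm_num
    obtain ⟨τa, hτa, hτaA⟩ := hexmk α hna
    obtain ⟨τb, hτb, hτbB⟩ := hexmk β hnb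
    have hexc : ∃ τ, N.IsBase τ ∧ (τ ∩ ↑γ).ncard ≠ 1 := by
      by_contra h
      push_neg at h
      apply hnc
      rw [hNhull]
      refine convexHull_min ?_ (hconvH γ 1)
      rintro y ⟨b, hb, rfl⟩
      show (∑ i ∈ γ, indicatorVec b i) = 1
      rw [← sumOn_apply, sumOn_indicator, h b hb]
      norm_num
    obtain ⟨τc, hτc, hτcC⟩ := hexc
    -- the bad base τa has all counts ≠ 1
    have hq : (τa ∩ ↑β).ncard ≠ 1 := by
      intro hq1
      -- q = 0 case: all β-counts are 1
      apply hτbB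
      have h := hkey τa τb hτa hτb
      rw [hq1] at h
      simp only [Nat.cast_one, sub_self, zero_mul] at h
      have hp : ((τa ∩ ↑α).ncard : ℤ) - 1 ≠ 0 := by
        intro h0
        apply hτaA
        omega
      have := mul_eq_zero.1 h
      rcases this with h0 | h0
      · exact absurd h0 hp
      · omega
    have hr : (τa ∩ ↑γ).ncard ≠ 1 := by
      intro hr1
      -- r = 0 case: all γ-counts are 1
      apply hτcC
      have hsa := hsum3 τa hτa
      have h := hkey τa τc hτa hτc
      have hsc := hsum3 τc hτc
      -- q = -p
      have hp : ((τa ∩ ↑α).ncard : ℤ) - 1 ≠ 0 := by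
        intro h0
        apply hτaA
        omega
      -- from hsa and hr1 : cA + cB = 2
      have hq' : ((τa ∩ ↑β).ncard : ℤ) - 1 = -(((τa ∩ ↑α).ncard : ℤ) - 1) := by
        push_cast
        omega
      rw [hq'] at h
      -- p * (cBτc - 1) = -p * (cAτc - 1) => cA + cB = 2 => cG = 1
      have h2 : (((τa ∩ ↑α).ncard : ℤ) - 1) *
          ((((τc ∩ ↑β).ncard : ℤ) - 1) + (((τc ∩ ↑α).ncard : ℤ) - 1)) = 0 := by ring_nf; linarith [h]
      rcases mul_eq_zero.1 h2 with h0 | h0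
      · exact absurd h0 hp
      · omega
    -- so the counts of τa are a permutation of (3,0,0)
    have hsa := hsum3 τa hτa
    have hcases : ((τa ∩ ↑α).ncard = 3 ∧ (τa ∩ ↑β).ncard = 0 ∧ (τa ∩ ↑γ).ncard = 0)
        ∨ ((τa ∩ ↑α).ncard = 0 ∧ (τa ∩ ↑β).ncard = 3 ∧ (τa ∩ ↑γ).ncard = 0)
        ∨ ((τa ∩ ↑α).ncard = 0 ∧ (τa ∩ ↑β).ncard = 0 ∧ (τa ∩ ↑γ).ncard = 3) := by
      omega
    -- τa has three elements
    obtain ⟨x, y, z, hxy, hxz, hyz, hτaeq⟩ := Set.ncard_eq_three.1 (hN3 τa hτa)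
    have hxτ : x ∈ τa := by rw [hτaeq]; exact Or.inl rfl
    have hyτ : y ∈ τa := by rw [hτaeq]; exact Or.inr (Or.inl rfl)
    have hzτ : z ∈ τa := by rw [hτaeq]; exact Or.inr (Or.inr rfl)
    have hdiff : τa \ {y} = ({x, z} : Set (Fin n)) := by
      rw [hτaeq]
      ext w
      simp only [Set.mem_diff, Set.mem_insert_iff, Set.mem_singleton_iff]
      constructor
      · rintro ⟨rfl | rfl | rfl, hw⟩
        · exact Or.inl rfl
        · exact absurd rfl hw
        · exact Or.inr rfl
      · rintro (rfl | rfl)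
        · exact ⟨Or.inl rfl, hxy⟩
        · exact ⟨Or.inr (Or.inr rfl), fun h => hyz h.symm⟩
    rcases hcases with ⟨hA3, hB0, hG0⟩ | ⟨hA0, hB3, hG0⟩ | ⟨hA0, hB0, hG3⟩
    · -- τa ⊆ α
      have hsubα : τa ⊆ ↑α := by
        have h1 : τa ∩ ↑α = τa := by
          apply Set.eq_of_subset_of_ncard_le Set.inter_subset_left _ τa.toFinite
          rw [hN3 τa hτa, hA3]
        rw [← h1]
        exact Set.inter_subset_right
      have hxα : x ∈ α := hsubα hxτ
      have hyα : y ∈ α := hsubα hyτ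
      have hzα : z ∈ α := hsubα hzτ
      have hB' : N.IsBase ({x, j0, l0} : Set (Fin n)) := hNtrans x hxα j0 hj0 l0 hl0
      have hyB' : y ∈ τa \ ({x, j0, l0} : Set (Fin n)) := by
        refine ⟨hyτ, ?_⟩
        simp only [Set.mem_insert_iff, Set.mem_singleton_iff]
        push_neg
        exact ⟨fun h => hxy h.symm, fun h => hαβ y (h ▸ hyα) (h ▸ hj0),
          fun h => hαγ y (h ▸ hyα) (h ▸ hl0)⟩
      obtain ⟨f, hf, hB''⟩ := hτa.exchange hB' hyB'
      rw [hdiff] at hB''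
      have hfj : f = j0 ∨ f = l0 := by
        obtain ⟨hf1, hf2⟩ := hf
        rcases hf1 with rfl | rfl | rfl
        · exact absurd hxτ hf2
        · exact Or.inl rfl
        · exact Or.inr rfl
      have hfa : f ∉ α := by
        rcases hfj with rfl | rfl
        · exact hj0α
        · exact hl0α
      have hcα : ((insert f ({x, z} : Set (Fin n))) ∩ ↑α).ncard = 2 :=
        insert_pair_inter_card2 hxz hxα hzα hfa
      have hxβ' : x ∉ β := fun h => hαβ x hxα h
      have hzβ' : z ∉ β := fun h => hαβ z hzα h
      rcases hfj with rfl | rfl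
      · have hcβ : ((insert f ({x, z} : Set (Fin n))) ∩ ↑β).ncard = 1 :=
          insert_pair_inter_card1 hxβ' hzβ' hj0
        have h := hkey τa _ hτa hB''
        rw [hA3, hB0] at h
        rw [hcα, hcβ] at h
        norm_num at h
      · have hcβ : ((insert f ({x, z} : Set (Fin n))) ∩ ↑β).ncard = 0 :=
          insert_pair_inter_card0 hxβ' hzβ' hl0β
        have h := hkey τa _ hτa hB''
        rw [hA3, hB0] at h
        rw [hcα, hcβ] at h
        norm_num at h
    · -- τa ⊆ β
      have hsubβ : τa ⊆ ↑β := by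
        have h1 : τa ∩ ↑β = τa := by
          apply Set.eq_of_subset_of_ncard_le Set.inter_subset_left _ τa.toFinite
          rw [hN3 τa hτa, hB3]
        rw [← h1]
        exact Set.inter_subset_right
      have hxβ : x ∈ β := hsubβ hxτ
      have hyβ : y ∈ β := hsubβ hyτ
      have hzβ : z ∈ β := hsubβ hzτ
      have hB' : N.IsBase ({i0, x, l0} : Set (Fin n)) := hNtrans i0 hi0 x hxβ l0 hl0
      have hyB' : y ∈ τa \ ({i0, x, l0} : Set (Fin n)) := by
        refine ⟨hyτ, ?_⟩
        simp only [Set.mem_insert_iff, Set.mem_singleton_iff]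
        push_neg
        exact ⟨fun h => hαβ y (h ▸ hi0) (h ▸ hyβ) |>.elim, fun h => hxy h.symm,
          fun h => hβγ y (h ▸ hyβ) (h ▸ hl0)⟩
      obtain ⟨f, hf, hB''⟩ := hτa.exchange hB' hyB'
      rw [hdiff] at hB''
      have hfj : f = i0 ∨ f = l0 := by
        obtain ⟨hf1, hf2⟩ := hf
        rcases hf1 with rfl | rfl | rfl
        · exact Or.inl rfl
        · exact absurd hxτ hf2
        · exact Or.inr rfl
      have hfb : f ∉ β := by
        rcases hfj with rfl | rfl
        · exact hi0β
        · exact hl0β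
      have hcβ : ((insert f ({x, z} : Set (Fin n))) ∩ ↑β).ncard = 2 :=
        insert_pair_inter_card2 hxz hxβ hzβ hfb
      have hxα' : x ∉ α := fun h => hαβ x h hxβ
      have hzα' : z ∉ α := fun h => hαβ z h hzβ
      rcases hfj with rfl | rfl
      · have hcα : ((insert f ({x, z} : Set (Fin n))) ∩ ↑α).ncard = 1 :=
          insert_pair_inter_card1 hxα' hzα' hi0
        have h := hkey τa _ hτa hB''
        rw [hA0, hB3] at h
        rw [hcα, hcβ] at h
        norm_num at h
      · have hcα : ((insert f ({x, z} : Set (Fin n))) ∩ ↑α).ncard = 0 :=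
          insert_pair_inter_card0 hxα' hzα' hl0α
        have h := hkey τa _ hτa hB''
        rw [hA0, hB3] at h
        rw [hcα, hcβ] at h
        norm_num at h
    · -- τa ⊆ γ
      have hsubγ : τa ⊆ ↑γ := by
        have h1 : τa ∩ ↑γ = τa := by
          apply Set.eq_of_subset_of_ncard_le Set.inter_subset_left _ τa.toFinite
          rw [hN3 τa hτa, hG3]
        rw [← h1]
        exact Set.inter_subset_right
      have hxγ : x ∈ γ := hsubγ hxτ
      have hyγ : y ∈ γ := hsubγ hyτ
      have hzγ : z ∈ γ := hsubγ hzτ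
      have hB' : N.IsBase ({i0, j0, x} : Set (Fin n)) := hNtrans i0 hi0 j0 hj0 x hxγ
      have hyB' : y ∈ τa \ ({i0, j0, x} : Set (Fin n)) := by
        refine ⟨hyτ, ?_⟩
        simp only [Set.mem_insert_iff, Set.mem_singleton_iff]
        push_neg
        exact ⟨fun h => hαγ y (h ▸ hi0) (h ▸ hyγ) |>.elim, fun h => hβγ y (h ▸ hj0) (h ▸ hyγ) |>.elim,
          fun h => hxy h.symm⟩
      obtain ⟨f, hf, hB''⟩ := hτa.exchange hB' hyB'
      rw [hdiff] at hB''
      have hfj : f = i0 ∨ f = j0 := by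
        obtain ⟨hf1, hf2⟩ := hf
        rcases hf1 with rfl | rfl | rfl
        · exact Or.inl rfl
        · exact Or.inr rfl
        · exact absurd hxτ hf2
      have hxα' : x ∉ α := fun h => hαγ x h hxγ
      have hzα' : z ∉ α := fun h => hαγ z h hzγ
      have hxβ' : x ∉ β := fun h => hβγ x h hxγ
      have hzβ' : z ∉ β := fun h => hβγ z h hzγ
      rcases hfj with rfl | rfl
      · have hcα : ((insert f ({x, z} : Set (Fin n))) ∩ ↑α).ncard = 1 :=
          insert_pair_inter_card1 hxα' hzα' hi0
        have hcβ : ((insert f ({x, z} : Set (Fin n))) ∩ ↑β).ncard = 0 :=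
          insert_pair_inter_card0 hxβ' hzβ' hi0β
        have h := hkey τa _ hτa hB''
        rw [hA0, hB0] at h
        rw [hcα, hcβ] at h
        norm_num at h
      · have hcα : ((insert f ({x, z} : Set (Fin n))) ∩ ↑α).ncard = 0 :=
          insert_pair_inter_card0 hxα' hzα' hj0α
        have hcβ : ((insert f ({x, z} : Set (Fin n))) ∩ ↑β).ncard = 1 :=
          insert_pair_inter_card1 hxβ' hzβ' hj0
        have h := hkey τa _ hτa hB''
        rw [hA0, hB0] at h
        rw [hcα, hcβ] at h
        norm_num at h
  refine ⟨part1, part2, ?_⟩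
  -- ===================== PART 3 =====================
  -- the centroid of C
  have hCne : C.Nonempty := hS.nonempty_cell C hC
  obtain ⟨sC, hsC⟩ := hS.poly C hC
  have hsCne : sC.Nonempty := by
    rcases hCne with ⟨x, hx⟩
    rw [hsC] at hx
    by_contra h
    rw [Finset.not_nonempty_iff_eq_empty] at h
    rw [h] at hx
    simp at hx
  have hcC : vcentroid sC ∈ C := by
    rw [hsC]
    exact vcentroid_mem sC hsCne
  obtain ⟨hcα, hcβ, hcγ⟩ := hCones _ hcC
  -- the span of C's vertex set
  have hspanC : vectorSpan ℝ (sC : Set (Fin n → ℝ)) = vectorSpan ℝ C := by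
    rw [hsC, vectorSpan_convexHull]
  -- sum over every cell is 3
  have hcellsum : ∀ D ∈ S, ∀ x ∈ D, sumOn Finset.univ x = 3 := by
    intro D hD x hx
    obtain ⟨N, hNE, hN3, hNhull⟩ := hmat D hD
    rw [hNhull] at hx
    have hconvU : Convex ℝ {y : Fin n → ℝ | sumOn Finset.univ y = 3} := by
      have h : {y : Fin n → ℝ | sumOn Finset.univ y = 3}
          = (sumOn Finset.univ) ⁻¹' {3} := by ext y; simp
      rw [h]
      exact (convex_singleton (3:ℝ)).linear_preimage _
    refine convexHull_min ?_ hconvU hx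
    rintro y ⟨b, hb, rfl⟩
    show sumOn Finset.univ (indicatorVec b) = 3
    rw [sumOn_indicator, Finset.coe_univ, Set.inter_univ, hN3 b hb]
    norm_num
  -- building kernel membership from the three sums
  have hmkker : ∀ w : Fin n → ℝ, sumOn α w = 0 → sumOn β w = 0 → sumOn γ w = 0 →
      w ∈ LinearMap.ker Φ := by
    intro w h1 h2 h3'
    rw [LinearMap.mem_ker, hΦdef]
    funext k
    rw [LinearMap.pi_apply]
    fin_cases k <;> simp [h1, h2, h3']
  -- finrank comparison between submodules
  have hfrmono : ∀ p q : Submodule ℝ (Fin n → ℝ), p ≤ q →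
      Module.finrank ℝ p ≤ Module.finrank ℝ q := by
    intro p q hpq
    exact Submodule.finrank_mono hpq
  -- Claim B: the span of a codimension-one cell in a hyperplane
  have claimB : ∀ (A : Finset (Fin n)) (iA jA : Fin n), iA ∈ A → jA ∉ A →
      ∀ D ∈ S, C ⊆ D → Module.finrank ℝ (vectorSpan ℝ D) = n - 2 →
      D ⊆ {x | ∑ i ∈ A, x i = 1} →
      vectorSpan ℝ D = LinearMap.ker ((sumOn A).prod (sumOn Finset.univ)) := by
    intro A iA jA hiA hjA D hD hCD hdim hDA
    have hconst : ∀ x ∈ D, ((sumOn A).prod (sumOn Finset.univ)) x = (1, 3) := by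
      intro x hx
      rw [LinearMap.prod_apply]
      exact Prod.ext (hDA hx) (hcellsum D hD x hx)
    have hle : vectorSpan ℝ D ≤ LinearMap.ker ((sumOn A).prod (sumOn Finset.univ)) :=
      vectorSpan_le_ker _ hconst
    apply Submodule.eq_of_le_of_finrank_le hle
    have hkr := finrank_ker_prod_eq (surj_prod_sumOn hiA hjA)
    rw [hdim]
    omega
  -- Claim C: a nonconstant probe functional
  have claimC : ∀ (A P : Finset (Fin n)),
      (∀ w : Fin n → ℝ, sumOn A w = 0 → sumOn Finset.univ w = 0 → sumOn P w = 0 →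
        w ∈ LinearMap.ker Φ) →
      ∀ D ∈ S, C ⊆ D → Module.finrank ℝ (vectorSpan ℝ D) = n - 2 →
      D ⊆ {x | ∑ i ∈ A, x i = 1} → ∃ p ∈ D, sumOn P p ≠ 1 := by
    intro A P hker3 D hD hCD hdim hDA
    by_contra h
    push_neg at h
    have hconst : ∀ x ∈ D, ((sumOn A).prod ((sumOn Finset.univ).prod (sumOn P))) x
        = (1, (3, 1)) := by
      intro x hx
      simp only [LinearMap.prod_apply]
      exact Prod.ext (hDA hx) (Prod.ext (hcellsum D hD x hx) (h x hx))
    have hle := vectorSpan_le_ker _ hconst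
    have hle2 : vectorSpan ℝ D ≤ LinearMap.ker Φ := by
      intro w hw
      have h0 := hle hw
      simp only [LinearMap.mem_ker, LinearMap.prod_apply] at h0
      have h1 : sumOn A w = 0 := congrArg Prod.fst h0
      have h2 : sumOn Finset.univ w = 0 := congrArg Prod.fst (congrArg Prod.snd h0)
      have h3' : sumOn P w = 0 := congrArg Prod.snd (congrArg Prod.snd h0)
      exact hker3 w h1 h2 h3'
    have := hfrmono _ _ hle2
    rw [hdim] at this
    omega
  -- Claim D: two codimension-one cells in the same hyperplane on the same side agree
  have claimD : ∀ (A P : Finset (Fin n)) (iA jA : Fin n), iA ∈ A → jA ∉ A →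
      (∀ w : Fin n → ℝ, sumOn A w = 0 → sumOn Finset.univ w = 0 → sumOn P w = 0 →
        w ∈ LinearMap.ker Φ) →
      (∀ w ∈ LinearMap.ker Φ, sumOn P w = 0) →
      sumOn P (vcentroid sC) = 1 →
      ∀ D1, D1 ∈ S → C ⊆ D1 → Module.finrank ℝ (vectorSpan ℝ D1) = n - 2 →
      ∀ D2, D2 ∈ S → C ⊆ D2 → Module.finrank ℝ (vectorSpan ℝ D2) = n - 2 →
      D1 ⊆ {x | ∑ i ∈ A, x i = 1} → D2 ⊆ {x | ∑ i ∈ A, x i = 1} →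
      ∀ p1 ∈ D1, ∀ p2 ∈ D2, 0 < (sumOn P p1 - 1) * (sumOn P p2 - 1) →
      D1 = D2 := by
    intro A P iA jA hiA hjA hker3 hPker hPc D1 hD1 hCD1 hdim1 D2 hD2 hCD2 hdim2 hDA1 hDA2
      p1 hp1 p2 hp2 hsign
    by_contra hne
    have hW1 := claimB A iA jA hiA hjA D1 hD1 hCD1 hdim1 hDA1
    have hW2 := claimB A iA jA hiA hjA D2 hD2 hCD2 hdim2 hDA2
    obtain ⟨sD1, hsD1⟩ := hS.poly D1 hD1
    obtain ⟨sD2, hsD2⟩ := hS.poly D2 hD2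
    have hconv1 : Convex ℝ D1 := by rw [hsD1]; exact convex_convexHull ℝ _
    have hconv2 : Convex ℝ D2 := by rw [hsD2]; exact convex_convexHull ℝ _
    have hCF : C ⊆ D1 ∩ D2 := Set.subset_inter hCD1 hCD2
    have hFface1 : IsFaceOf (D1 ∩ D2) D1 := hS.inter_face D1 hD1 D2 hD2
    have hFS : D1 ∩ D2 ∈ S :=
      hS.face_closed D1 hD1 _ hFface1 ⟨_, hCF hcC⟩
    obtain ⟨sF, hsF⟩ := hS.poly _ hFS
    -- D1 ∩ D2 is not all of D1
    have hFne1 : D1 ∩ D2 ≠ D1 := by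
      intro hFD1
      have hsub : D1 ⊆ D2 := by
        intro x hx
        rw [← hFD1] at hx
        exact hx.2
      have hface : IsExtreme ℝ D2 D1 := by
        have h := (hS.inter_face D2 hD2 D1 hD1).1
        rwa [Set.inter_eq_right.2 hsub] at h
      exact hne (extreme_eq_of_vectorSpan_eq hface sD1 hsD1 ⟨_, hCD1 hcC⟩
        (by rw [hW1, hW2]))
    -- span analysis of the intersection
    have hVF : vectorSpan ℝ C ≤ vectorSpan ℝ (D1 ∩ D2) := vectorSpan_mono ℝ hCF
    have hFW : vectorSpan ℝ (D1 ∩ D2) ≤ vectorSpan ℝ D1 :=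
      vectorSpan_mono ℝ Set.inter_subset_left
    have hFneq : vectorSpan ℝ (D1 ∩ D2) ≠ vectorSpan ℝ D1 := by
      intro heq
      exact hFne1 (extreme_eq_of_vectorSpan_eq hFface1.1 sF hsF ⟨_, hCF hcC⟩ heq)
    have hltF : Module.finrank ℝ (vectorSpan ℝ (D1 ∩ D2)) < n - 2 := by
      have := Submodule.finrank_lt_finrank_of_lt (lt_of_le_of_ne hFW hFneq)
      rwa [hdim1] at this
    have hgeF : n - 3 ≤ Module.finrank ℝ (vectorSpan ℝ (D1 ∩ D2)) := by
      have := hfrmono _ _ hVF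
      rwa [hcodim2] at this
    have hFV : vectorSpan ℝ C = vectorSpan ℝ (D1 ∩ D2) :=
      Submodule.eq_of_le_of_finrank_le hVF (by rw [hcodim2]; omega)
    -- the probe functional is constant one on the intersection
    have hψF : ∀ x ∈ D1 ∩ D2, sumOn P x = 1 := by
      intro x hx
      have hxc : x - vcentroid sC ∈ vectorSpan ℝ (D1 ∩ D2) :=
        vsub_mem_vectorSpan ℝ hx (hCF hcC)
      rw [← hFV, hVC] at hxc
      have h0 := hPker _ hxc
      rw [map_sub, hPc] at h0
      linarith
    -- the cone argument
    have hw1 : p1 - vcentroid sC ∈ LinearMap.ker ((sumOn A).prod (sumOn Finset.univ)) := by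
      rw [← hW1]
      exact vsub_mem_vectorSpan ℝ hp1 (hCD1 hcC)
    have hw2 : p2 - vcentroid sC ∈ LinearMap.ker ((sumOn A).prod (sumOn Finset.univ)) := by
      rw [← hW2]
      exact vsub_mem_vectorSpan ℝ hp2 (hCD2 hcC)
    have hψ1 : sumOn P (p1 - vcentroid sC) = sumOn P p1 - 1 := by
      rw [map_sub, hPc]
    have hψ2 : sumOn P (p2 - vcentroid sC) = sumOn P p2 - 1 := by
      rw [map_sub, hPc]
    have hψ2ne : sumOn P p2 - 1 ≠ 0 := by
      intro h0
      rw [h0, mul_zero] at hsign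
      exact lt_irrefl _ hsign
    have hψ1ne : sumOn P p1 - 1 ≠ 0 := by
      intro h0
      rw [h0, zero_mul] at hsign
      exact lt_irrefl _ hsign
    obtain ⟨μ, hμdef⟩ : ∃ μ : ℝ, μ = (sumOn P p1 - 1) / (sumOn P p2 - 1) := ⟨_, rfl⟩
    have hμpos : 0 < μ := by
      rw [hμdef]
      rcases mul_pos_iff.1 hsign with ⟨h1, h2⟩ | ⟨h1, h2⟩
      · exact div_pos h1 h2
      · exact div_pos_of_neg_of_neg h1 h2
    obtain ⟨v, hvdef⟩ : ∃ v : Fin n → ℝ,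
      v = (p1 - vcentroid sC) - μ • (p2 - vcentroid sC) := ⟨_, rfl⟩
    have hvW : v ∈ LinearMap.ker ((sumOn A).prod (sumOn Finset.univ)) := by
      rw [hvdef]
      exact sub_mem hw1 (Submodule.smul_mem _ μ hw2)
    have hvA : sumOn A v = 0 := congrArg Prod.fst (LinearMap.mem_ker.1 hvW)
    have hvU : sumOn Finset.univ v = 0 := congrArg Prod.snd (LinearMap.mem_ker.1 hvW)
    have hvP : sumOn P v = 0 := by
      rw [hvdef, map_sub, map_smul, hψ1, hψ2, smul_eq_mul, hμdef]
      field_simp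
      ring
    have hvV : v ∈ vectorSpan ℝ (sC : Set (Fin n → ℝ)) := by
      rw [hspanC, hVC]
      exact hker3 v hvA hvU hvP
    obtain ⟨ε, hε, hpert⟩ := vcentroid_perturb sC hsCne v hvV
    -- choose the step size
    obtain ⟨t, htdef⟩ : ∃ t : ℝ, t = min (min 1 (1 / (2 * μ))) (ε / 2) := ⟨_, rfl⟩
    have ht0 : 0 < t := by
      rw [htdef]
      apply lt_min (lt_min one_pos (by positivity)) (by positivity)
    have ht1 : t ≤ 1 := by
      rw [htdef]
      exact le_trans (min_le_left _ _) (min_le_left _ _)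
    have htμ : t * μ ≤ 1 / 2 := by
      have h1 : t ≤ 1 / (2 * μ) := by
        rw [htdef]
        exact le_trans (min_le_left _ _) (min_le_right _ _)
      rw [div_eq_mul_inv] at h1
      calc t * μ ≤ (1 * (2 * μ)⁻¹) * μ := by
            apply mul_le_mul_of_nonneg_right h1 (le_of_lt hμpos)
        _ = 1 / 2 := by field_simp
    have htμ1 : 1 - t * μ ≠ 0 := by
      intro h
      rw [sub_eq_zero] at h
      rw [← h] at htμ
      norm_num at htμ
    have htμpos : 0 < 1 - t * μ := by nlinarith
    obtain ⟨s', hs'def⟩ : ∃ s' : ℝ, s' = t / (1 - t * μ) := ⟨_, rfl⟩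
    have hs'pos : 0 < s' := by
      rw [hs'def]
      positivity
    have hs'ε : |s'| ≤ ε := by
      rw [abs_of_pos hs'pos]
      rw [hs'def, div_le_iff₀ htμpos]
      have htε : t ≤ ε / 2 := by rw [htdef]; exact min_le_right _ _
      nlinarith
    have hcsv : vcentroid sC + s' • v ∈ C := by
      rw [hsC]
      exact hpert s' hs'ε
    -- the common point
    have hx1 : vcentroid sC + t • (p1 - vcentroid sC) ∈ D1 := by
      have h := hconv1 (hCD1 hcC) hp1 (by linarith : (0:ℝ) ≤ 1 - t) (le_of_lt ht0)
        (by ring)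
      have he : (1 - t) • vcentroid sC + t • p1
          = vcentroid sC + t • (p1 - vcentroid sC) := by
        module
      rwa [he] at h
    have hx2 : vcentroid sC + t • (p1 - vcentroid sC) ∈ D2 := by
      have h := hconv2 (hCD2 hcsv) hp2 (le_of_lt htμpos)
        (by positivity : (0:ℝ) ≤ t * μ) (by ring)
      have he : (1 - t * μ) • (vcentroid sC + s' • v) + (t * μ) • p2
          = vcentroid sC + t • (p1 - vcentroid sC) := by
        have hp1c : p1 - vcentroid sC = μ • (p2 - vcentroid sC) + v := by
          rw [hvdef]
          abel
        rw [hp1c]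
        have hs1 : (1 - t * μ) * s' = t := by
          rw [hs'def]
          field_simp
        match_scalars
        · ring
        · nlinarith [hs1]
        · ring
      rwa [he] at h
    have hxF := hψF _ ⟨hx1, hx2⟩
    rw [map_add, map_smul, hψ1, hPc, smul_eq_mul] at hxF
    have : t * (sumOn P p1 - 1) = 0 := by linarith
    rcases mul_eq_zero.1 this with h0 | h0
    · exact absurd h0 (ne_of_gt ht0)
    · exact hψ1ne h0
  -- kernel-hypothesis instances
  have hkerα : ∀ w ∈ LinearMap.ker Φ, sumOn α w = 0 := by
    intro w hw
    rw [LinearMap.mem_ker, hΦdef] at hw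
    have := congrFun hw 0
    simpa [LinearMap.pi_apply] using this
  have hkerβ : ∀ w ∈ LinearMap.ker Φ, sumOn β w = 0 := by
    intro w hw
    rw [LinearMap.mem_ker, hΦdef] at hw
    have := congrFun hw 1
    simpa [LinearMap.pi_apply] using this
  have hker30 : ∀ w : Fin n → ℝ, sumOn α w = 0 → sumOn Finset.univ w = 0 → sumOn β w = 0 →
      w ∈ LinearMap.ker Φ := by
    intro w h1 h2 h3'
    have hγw : sumOn γ w = 0 := by
      have := hsumdecomp w
      rw [h1, h2, h3'] at this
      linarith
    exact hmkker w h1 h3' hγw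
  have hker31 : ∀ w : Fin n → ℝ, sumOn β w = 0 → sumOn Finset.univ w = 0 → sumOn α w = 0 →
      w ∈ LinearMap.ker Φ := by
    intro w h1 h2 h3'
    have hγw : sumOn γ w = 0 := by
      have := hsumdecomp w
      rw [h1, h2, h3'] at this
      linarith
    exact hmkker w h3' h1 hγw
  have hker32 : ∀ w : Fin n → ℝ, sumOn γ w = 0 → sumOn Finset.univ w = 0 → sumOn α w = 0 →
      w ∈ LinearMap.ker Φ := by
    intro w h1 h2 h3'
    have hβw : sumOn β w = 0 := by
      have := hsumdecomp w
      rw [h1, h2, h3'] at this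
      linarith
    exact hmkker w h3' hβw h1
  -- the diagonal step: same hyperplane and same sign forces equality
  have hdiag : ∀ (A P : Finset (Fin n)) (iA jA : Fin n), iA ∈ A → jA ∉ A →
      (∀ w : Fin n → ℝ, sumOn A w = 0 → sumOn Finset.univ w = 0 → sumOn P w = 0 →
        w ∈ LinearMap.ker Φ) →
      (∀ w ∈ LinearMap.ker Φ, sumOn P w = 0) →
      sumOn P (vcentroid sC) = 1 →
      ∀ D1, D1 ∈ S → C ⊆ D1 → Module.finrank ℝ (vectorSpan ℝ D1) = n - 2 →
      ∀ D2, D2 ∈ S → C ⊆ D2 → Module.finrank ℝ (vectorSpan ℝ D2) = n - 2 →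
      D1 ⊆ {x | ∑ i ∈ A, x i = 1} → D2 ⊆ {x | ∑ i ∈ A, x i = 1} →
      ((if ∃ p ∈ D1, 1 < sumOn P p then true else false)
        = (if ∃ p ∈ D2, 1 < sumOn P p then true else false)) →
      D1 = D2 := by
    intro A P iA jA hiA hjA hker3 hPker hPc D1 hD1 hCD1 hdim1 D2 hD2 hCD2 hdim2
      hDA1 hDA2 hsnd
    by_cases hp1 : ∃ p ∈ D1, 1 < sumOn P p <;> by_cases hp2 : ∃ p ∈ D2, 1 < sumOn P p
    · obtain ⟨p1, hm1, hgt1⟩ := hp1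
      obtain ⟨p2, hm2, hgt2⟩ := hp2
      exact claimD A P iA jA hiA hjA hker3 hPker hPc D1 hD1 hCD1 hdim1 D2 hD2 hCD2 hdim2
        hDA1 hDA2 p1 hm1 p2 hm2 (mul_pos (by linarith) (by linarith))
    · simp [hp1, hp2] at hsnd
    · simp [hp1, hp2] at hsnd
    · push_neg at hp1 hp2
      obtain ⟨p1, hm1, hne1⟩ := claimC A P hker3 D1 hD1 hCD1 hdim1 hDA1
      obtain ⟨p2, hm2, hne2⟩ := claimC A P hker3 D2 hD2 hCD2 hdim2 hDA2
      have h1' : sumOn P p1 < 1 := lt_of_le_of_ne (hp1 p1 hm1) hne1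
      have h2' : sumOn P p2 < 1 := lt_of_le_of_ne (hp2 p2 hm2) hne2
      exact claimD A P iA jA hiA hjA hker3 hPker hPc D1 hD1 hCD1 hdim1 D2 hD2 hCD2 hdim2
        hDA1 hDA2 p1 hm1 p2 hm2 (mul_pos_of_neg_of_neg (by linarith) (by linarith))
  -- the classifying map
  obtain ⟨χ, hχdef⟩ : ∃ χ : Set (Fin n → ℝ) → Fin 3 × Bool, χ = fun D =>
      if D ⊆ {x | ∑ i ∈ α, x i = 1} then
        (0, if ∃ p ∈ D, 1 < sumOn β p then true else false)
      else if D ⊆ {x | ∑ i ∈ β, x i = 1} then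
        (1, if ∃ p ∈ D, 1 < sumOn α p then true else false)
      else
        (2, if ∃ p ∈ D, 1 < sumOn α p then true else false) := ⟨_, rfl⟩
  have hinj : Set.InjOn χ {D | D ∈ S ∧ C ⊆ D ∧ Module.finrank ℝ (vectorSpan ℝ D) = n - 2} := by
    rintro D1 ⟨hD1m, hCD1', hdim1'⟩ D2 ⟨hD2m, hCD2', hdim2'⟩ hχeq
    rw [hχdef] at hχeq
    simp only at hχeq
    by_cases h1a : D1 ⊆ {x | ∑ i ∈ α, x i = 1} <;>
      by_cases h2a : D2 ⊆ {x | ∑ i ∈ α, x i = 1}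
    · rw [if_pos h1a, if_pos h2a] at hχeq
      have hsnd : (if ∃ p ∈ D1, 1 < sumOn β p then true else false)
          = (if ∃ p ∈ D2, 1 < sumOn β p then true else false) := congrArg Prod.snd hχeq
      exact hdiag α β i0 j0 hi0 hj0α hker30 hkerβ hcβ D1 hD1m hCD1' hdim1'
        D2 hD2m hCD2' hdim2' h1a h2a hsnd
    · rw [if_pos h1a, if_neg h2a] at hχeq
      exfalso
      by_cases h2b : D2 ⊆ {x | ∑ i ∈ β, x i = 1}
      · rw [if_pos h2b] at hχeq
        have := congrArg Prod.fst hχeq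
        simp at this
      · rw [if_neg h2b] at hχeq
        have := congrArg Prod.fst hχeq
        simp at this
    · rw [if_neg h1a, if_pos h2a] at hχeq
      exfalso
      by_cases h1b : D1 ⊆ {x | ∑ i ∈ β, x i = 1}
      · rw [if_pos h1b] at hχeq
        have := congrArg Prod.fst hχeq
        simp at this
      · rw [if_neg h1b] at hχeq
        have := congrArg Prod.fst hχeq
        simp at this
    · rw [if_neg h1a, if_neg h2a] at hχeq
      by_cases h1b : D1 ⊆ {x | ∑ i ∈ β, x i = 1} <;>
        by_cases h2b : D2 ⊆ {x | ∑ i ∈ β, x i = 1}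
      · rw [if_pos h1b, if_pos h2b] at hχeq
        have hsnd : (if ∃ p ∈ D1, 1 < sumOn α p then true else false)
            = (if ∃ p ∈ D2, 1 < sumOn α p then true else false) := congrArg Prod.snd hχeq
        exact hdiag β α j0 i0 hj0 hi0β hker31 hkerα hcα D1 hD1m hCD1' hdim1'
          D2 hD2m hCD2' hdim2' h1b h2b hsnd
      · exfalso
        rw [if_pos h1b, if_neg h2b] at hχeq
        have := congrArg Prod.fst hχeq
        simp at this
      · exfalso
        rw [if_neg h1b, if_pos h2b] at hχeq
        have := congrArg Prod.fst hχeq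
        simp at this
      · rw [if_neg h1b, if_neg h2b] at hχeq
        have h1c : D1 ⊆ {x | ∑ i ∈ γ, x i = 1} := by
          rcases part2 D1 hD1m hCD1' hdim1' with h | h | h
          · exact absurd h h1a
          · exact absurd h h1b
          · exact h
        have h2c : D2 ⊆ {x | ∑ i ∈ γ, x i = 1} := by
          rcases part2 D2 hD2m hCD2' hdim2' with h | h | h
          · exact absurd h h2a
          · exact absurd h h2b
          · exact h
        have hsnd : (if ∃ p ∈ D1, 1 < sumOn α p then true else false)
            = (if ∃ p ∈ D2, 1 < sumOn α p then true else false) := congrArg Prod.snd hχeq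
        exact hdiag γ α l0 i0 hl0 hi0γ hker32 hkerα hcα D1 hD1m hCD1' hdim1'
          D2 hD2m hCD2' hdim2' h1c h2c hsnd
  have hcount := Set.ncard_le_ncard_of_injOn χ
    (fun D _ => Set.mem_univ (χ D)) hinj Set.finite_univ
  have h6 : (Set.univ : Set (Fin 3 × Bool)).ncard = 6 := by
    rw [Set.ncard_univ]
    simp
  exact le_trans hcount (le_of_eq h6)
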